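/- arXiv:1412.1192 — 3 statements merged into one kernel-verified Lean document; each statement's English description precedes it below -/
import Mathlib

section
/- The family of bounded operators indexed by pairs (θ, ℓ) with θ ∈ [0, 2π) and ℓ ∈ ℤ, given by (θ, ℓ) ↦ W(θ, ℓ), is linearly independent over ℂ: for any finitely supported family of coefficients c_{(θ,ℓ)} ∈ ℂ with θ ranging over [0,2π) and ℓ over ℤ, if Σ c_{(θ,ℓ)} • W(θ,ℓ) = 0 then all c_{(θ,ℓ)} = 0. -/
open Complex

noncomputable section

/-- The Hilbert space `H := ℓ²(ℤ, ℂ)`. -/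
abbrev H : Type := lp (fun _ : ℤ => ℂ) 2

/-- The orthonormal basis vectors `e ℓ = lp.single 2 ℓ 1`. -/
def e (ℓ : ℤ) : H := lp.single 2 ℓ 1

/-- The Weyl operators `W(θ, ℓ) := exp(−iℓθ/2) • (U θ ∘ V^ℓ)`. -/
def W (U : ℝ → (H →L[ℂ] H)) (V : unitary (H →L[ℂ] H)) (θ : ℝ) (ℓ : ℤ) : H →L[ℂ] H :=
  Complex.exp (-Complex.I * ℓ * θ / 2) •
    ((U θ) ∘L ((V ^ ℓ : unitary (H →L[ℂ] H)) : H →L[ℂ] H))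

-- character lemma
lemma char_aux (S : Finset ℝ) (hS : ∀ θ ∈ S, θ ∈ Set.Ico (0:ℝ) (2*Real.pi)) (a : ℝ → ℂ)
    (h : ∀ m : ℤ, ∑ θ ∈ S, a θ * Complex.exp (Complex.I * θ * m) = 0) :
    ∀ θ ∈ S, a θ = 0 := by
  classical
  set χ : ℝ → (Multiplicative ℤ →* ℂ) := fun θ =>
    (Units.coeHom ℂ).comp (zpowersHom ℂˣ (Units.mk0 (Complex.exp (Complex.I * θ)) (Complex.exp_ne_zero _))) with hχ
  have hχ_apply : ∀ (θ : ℝ) (m : ℤ), χ θ (Multiplicative.ofAdd m) = Complex.exp (Complex.I * θ * m) := by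
    intro θ m
    show ((Units.mk0 (Complex.exp (Complex.I * θ)) (Complex.exp_ne_zero _)) ^ m : ℂˣ).val = _
    rw [Units.val_zpow_eq_zpow_val, Units.val_mk0, ← Complex.exp_int_mul]
    ring_nf
  have hinj : Function.Injective fun s : ↥S => χ s := by
    intro s t hst
    have hst' : χ (s:ℝ) = χ (t:ℝ) := hst
    have h1 : χ s (Multiplicative.ofAdd 1) = χ t (Multiplicative.ofAdd 1) := by rw [hst']
    rw [hχ_apply, hχ_apply] at h1
    push_cast at h1
    rw [mul_one, mul_one, Complex.exp_eq_exp_iff_exists_int] at h1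
    obtain ⟨n, hn⟩ := h1
    have hs := hS s s.2
    have ht := hS t t.2
    have hIn : Complex.I * s = Complex.I * (↑(t:ℝ) + n * (2*Real.pi)) := by
      rw [hn]; ring
    have hst' : (s : ℝ) = (t : ℝ) + n * (2*Real.pi) := by
      have := mul_left_cancel₀ Complex.I_ne_zero hIn
      exact_mod_cast this
    have hn0 : n = 0 := by
      rcases hs with ⟨hs0, hs2⟩; rcases ht with ⟨ht0, ht2⟩
      have hpi := Real.pi_pos
      have hb1 : (-1:ℝ) < n := by nlinarith
      have hb2 : (n:ℝ) < 1 := by nlinarith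
      have hb1' : (-1:ℤ) < n := by exact_mod_cast hb1
      have hb2' : n < (1:ℤ) := by exact_mod_cast hb2
      omega
    have : (s : ℝ) = (t : ℝ) := by rw [hst', hn0]; push_cast; ring
    exact Subtype.ext this
  have li : LinearIndependent ℂ (fun s : ↥S => ⇑(χ s)) :=
    (linearIndependent_monoidHom (Multiplicative ℤ) ℂ).comp _ hinj
  have hsum : ∑ s : ↥S, a s • ⇑(χ s) = 0 := by
    funext x
    have hx : ∀ s : ↥S, χ (s:ℝ) x = Complex.exp (Complex.I * s * (x.toAdd : ℤ)) := by
      intro s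
      rw [← ofAdd_toAdd x]
      exact hχ_apply _ _
    have := h x.toAdd
    rw [← Finset.sum_attach S (fun θ => a θ * Complex.exp (Complex.I * θ * (x.toAdd : ℤ)))] at this
    simpa [Finset.sum_apply, hx, smul_eq_mul] using this
  intro θ hθ
  have := (Fintype.linearIndependent_iff.mp li) (fun s => a s) (by simpa using hsum) ⟨θ, hθ⟩
  exact this

lemma coe_mul_apply (A B : unitary (H →L[ℂ] H)) (x : H) :
    ((A * B : unitary (H →L[ℂ] H)) : H →L[ℂ] H) x
      = (A : H →L[ℂ] H) ((B : H →L[ℂ] H) x) := by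
  rw [MulMemClass.coe_mul, ContinuousLinearMap.mul_apply]

lemma Vpow_apply (V : unitary (H →L[ℂ] H)) (hV : ∀ ℓ : ℤ, (V : H →L[ℂ] H) (e ℓ) = e (ℓ + 1))
    (n : ℤ) (m : ℤ) : ((V ^ n : unitary (H →L[ℂ] H)) : H →L[ℂ] H) (e m) = e (m + n) := by
  have hVinv : ∀ ℓ : ℤ, ((V⁻¹ : unitary (H →L[ℂ] H)) : H →L[ℂ] H) (e ℓ) = e (ℓ - 1) := by
    intro ℓ
    have h1 : ((V⁻¹ * V : unitary (H →L[ℂ] H)) : H →L[ℂ] H) (e (ℓ - 1)) = e (ℓ - 1) := by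
      rw [inv_mul_cancel, OneMemClass.coe_one, ContinuousLinearMap.one_apply]
    rw [coe_mul_apply, hV (ℓ - 1), sub_add_cancel] at h1
    exact h1
  induction n using Int.induction_on generalizing m with
  | zero => rw [zpow_zero, OneMemClass.coe_one, ContinuousLinearMap.one_apply, add_zero]
  | succ k ih =>
      rw [zpow_add_one, coe_mul_apply, hV m, ih (m + 1)]
      congr 1; ring
  | pred k ih =>
      rw [show (-(k:ℤ) - 1) = (-(k:ℤ)) - 1 by ring, zpow_sub_one, coe_mul_apply, hVinv m,
        ih (m - 1)]
      congr 1; ring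

lemma inner_e (k j : ℤ) : (inner ℂ (e k) (e j) : ℂ) = if k = j then 1 else 0 := by
  rw [e, e, lp.inner_single_left]
  simp [lp.single_apply, Pi.single_apply]

/-- **Linear independence of the Weyl operators.** The family
`(θ, ℓ) ↦ W(θ, ℓ)`, indexed by pairs with `θ ∈ [0, 2π)` and `ℓ ∈ ℤ`, is linearly
independent over `ℂ` in the space of bounded operators on `H`. -/
theorem weyl_linearIndependent
    (U : ℝ → (H →L[ℂ] H)) (V : unitary (H →L[ℂ] H))
    (hU : ∀ (θ : ℝ) (ℓ : ℤ), U θ (e ℓ) = Complex.exp (Complex.I * ℓ * θ) • e ℓ)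
    (hV : ∀ ℓ : ℤ, (V : H →L[ℂ] H) (e ℓ) = e (ℓ + 1)) :
    LinearIndependent ℂ
      (fun p : (Set.Ico (0 : ℝ) (2 * Real.pi)) × ℤ => W U V (p.1 : ℝ) p.2) := by
  classical
  rw [linearIndependent_iff']
  intro s g hsum i hi
  set ℓ₀ := i.2 with hℓ₀
  have hW : ∀ (θ : ℝ) (ℓ m : ℤ), W U V θ ℓ (e m)
      = (Complex.exp (-Complex.I * ℓ * θ / 2) * Complex.exp (Complex.I * ((m + ℓ : ℤ) : ℂ) * θ)) • e (m + ℓ) := by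
    intro θ ℓ m
    rw [W, ContinuousLinearMap.smul_apply, ContinuousLinearMap.comp_apply, Vpow_apply V hV, hU,
      smul_smul]
  have key : ∀ m : ℤ, ∑ p ∈ s.filter (fun p => p.2 = ℓ₀),
      (g p * Complex.exp (Complex.I * ℓ₀ * (p.1 : ℝ) / 2)) * Complex.exp (Complex.I * ((p.1 : ℝ) : ℂ) * m) = 0 := by
    intro m
    have h0 : (inner ℂ (e (m + ℓ₀)) ((∑ p ∈ s, g p • W U V (p.1 : ℝ) p.2) (e m)) : ℂ) = 0 := by
      rw [hsum]; simp
    rw [ContinuousLinearMap.sum_apply, inner_sum] at h0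
    have h0' : ∑ p ∈ s, g p * ((Complex.exp (-Complex.I * p.2 * (p.1 : ℝ) / 2)
        * Complex.exp (Complex.I * ((m + p.2 : ℤ) : ℂ) * (p.1 : ℝ)))
        * (if m + ℓ₀ = m + p.2 then 1 else 0)) = 0 := by
      refine Eq.trans (Finset.sum_congr rfl fun p hp => ?_) h0
      rw [ContinuousLinearMap.smul_apply, inner_smul_right, hW, inner_smul_right, inner_e]
    rw [← h0']
    rw [Finset.sum_filter]
    refine Finset.sum_congr rfl fun p hp => ?_
    by_cases hcase : p.2 = ℓ₀
    · rw [if_pos hcase, if_pos (by rw [hcase]), hcase, mul_one, mul_assoc,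
        ← Complex.exp_add, ← Complex.exp_add]
      congr 2
      push_cast
      ring
    · rw [if_neg hcase, if_neg (fun h => hcase (add_left_cancel h).symm), mul_zero, mul_zero]
  set T := s.filter (fun p => p.2 = ℓ₀) with hT
  have hinjT : ∀ p ∈ T, ∀ q ∈ T, ((p.1 : ℝ)) = (q.1 : ℝ) → p = q := by
    intro p hp q hq h
    have hp2 := (Finset.mem_filter.mp hp).2
    have hq2 := (Finset.mem_filter.mp hq).2
    exact Prod.ext (Subtype.ext h) (hp2.trans hq2.symm)
  set S : Finset ℝ := T.image (fun p => (p.1 : ℝ)) with hS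
  set a : ℝ → ℂ := fun θ =>
    if hθ : θ ∈ Set.Ico (0:ℝ) (2*Real.pi) then
      g (⟨θ, hθ⟩, ℓ₀) * Complex.exp (Complex.I * ℓ₀ * θ / 2) else 0 with ha
  have hSmem : ∀ θ ∈ S, θ ∈ Set.Ico (0:ℝ) (2*Real.pi) := by
    intro θ hθ
    obtain ⟨p, _, rfl⟩ := Finset.mem_image.mp hθ
    exact p.1.2
  have himg : ∀ m : ℤ, ∑ θ ∈ S, a θ * Complex.exp (Complex.I * θ * m) = 0 := by
    intro m
    rw [hS, Finset.sum_image hinjT]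
    rw [← key m]
    refine Finset.sum_congr rfl fun p hp => ?_
    have hp2 := (Finset.mem_filter.mp hp).2
    have hpe : ((⟨(p.1 : ℝ), p.1.2⟩, ℓ₀) : (Set.Ico (0:ℝ) (2*Real.pi)) × ℤ) = p :=
      Prod.ext (Subtype.ext rfl) hp2.symm
    rw [ha]
    simp only [dif_pos p.1.2, hpe]
  have hz := char_aux S hSmem a himg (i.1 : ℝ)
    (Finset.mem_image.mpr ⟨i, Finset.mem_filter.mpr ⟨hi, rfl⟩, rfl⟩)
  rw [ha] at hz
  simp only [dif_pos i.1.2] at hz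
  have hie : ((⟨(i.1 : ℝ), i.1.2⟩, ℓ₀) : (Set.Ico (0:ℝ) (2*Real.pi)) × ℤ) = i :=
    Prod.ext (Subtype.ext rfl) rfl
  rw [hie] at hz
  rcases mul_eq_zero.mp hz with h | h
  · exact h
  · exact absurd h (Complex.exp_ne_zero _)
end
end

section
/- The Weyl pair acts irreducibly: if a bounded operator T on H satisfies T ∘ U(θ) = U(θ) ∘ T for every θ ∈ ℝ and T ∘ V = V ∘ T, then there exists c ∈ ℂ with T = c • (identity on H). Consequently the von Neumann algebra generated by {U(θ) : θ ∈ ℝ} ∪ {V} is all of B(H). -/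
open Complex

noncomputable section

open scoped InnerProductSpace

lemma e_hasSum (x : H) : HasSum (fun i : ℤ => (x i : ℂ) • e i) x := by
  have h := lp.hasSum_single (E := fun _ : ℤ => ℂ) (p := 2) (by norm_num) x
  convert h using 2 with i
  rw [e, ← lp.single_smul]
  simp

lemma ext_basis {X : Type*} [NormedAddCommGroup X] [NormedSpace ℂ X]
    (f g : H →L[ℂ] X) (h : ∀ ℓ, f (e ℓ) = g (e ℓ)) : f = g := by
  ext x
  have hs := e_hasSum x
  have h1 : HasSum (fun i : ℤ => f ((x i : ℂ) • e i)) (f x) := hs.mapL f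
  have h2 : HasSum (fun i : ℤ => g ((x i : ℂ) • e i)) (g x) := hs.mapL g
  refine h1.unique ?_
  simpa only [map_smul, h] using h2

lemma inner_e_s2 (m : ℤ) (x : H) : ⟪e m, x⟫_ℂ = x m := by
  rw [e, lp.inner_single_left]
  simp

lemma inner_e_e (m k : ℤ) : ⟪e m, e k⟫_ℂ = if k = m then 1 else 0 := by
  rw [inner_e_s2, e]
  by_cases h : m = k
  · subst h; rw [lp.single_apply_self, if_pos rfl]
  · rw [lp.single_apply_ne _ _ _ h, if_neg (fun hh => h hh.symm)]

/-- **Irreducibility of the Weyl pair.** Any bounded operator commuting with every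
`U θ` and with `V` is a scalar multiple of the identity; consequently the double
commutant of `{U θ : θ ∈ ℝ} ∪ {V}` (hence the von Neumann algebra they generate)
is all of `B(H)`. -/
theorem weyl_pair_irreducible
    (U : ℝ → (H →L[ℂ] H)) (V : unitary (H →L[ℂ] H))
    (hU : ∀ (θ : ℝ) (ℓ : ℤ), U θ (e ℓ) = Complex.exp (Complex.I * ℓ * θ) • e ℓ)
    (hV : ∀ ℓ : ℤ, (V : H →L[ℂ] H) (e ℓ) = e (ℓ + 1)) :
    (∀ T : H →L[ℂ] H,
        (∀ θ : ℝ, T ∘L U θ = U θ ∘L T) →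
        T ∘L (V : H →L[ℂ] H) = (V : H →L[ℂ] H) ∘L T →
        ∃ c : ℂ, T = c • (1 : H →L[ℂ] H)) ∧
    Set.centralizer (Set.centralizer (Set.range U ∪ {(V : H →L[ℂ] H)})) =
      Set.univ := by
  -- components of U θ y
  have hUcomp : ∀ (θ : ℝ) (m : ℤ) (y : H),
      ⟪e m, U θ y⟫_ℂ = Complex.exp (Complex.I * m * θ) * ⟪e m, y⟫_ℂ := by
    intro θ m y
    have : (innerSL ℂ (e m)).comp (U θ) =
        Complex.exp (Complex.I * m * θ) • (innerSL ℂ (e m) : H →L[ℂ] ℂ) := by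
      apply ext_basis
      intro k
      simp only [ContinuousLinearMap.coe_comp', Function.comp_apply, hU,
        ContinuousLinearMap.coe_smul', Pi.smul_apply, innerSL_apply_apply, inner_smul_right]
      rw [inner_e_e]
      split_ifs with hk
      · subst hk; simp [smul_eq_mul]
      · simp
    have := congrFun (congrArg (fun (f : H →L[ℂ] ℂ) => (f : H → ℂ)) this) y
    simpa using this
  have key : ∀ T : H →L[ℂ] H,
      (∀ θ : ℝ, T ∘L U θ = U θ ∘L T) →
      T ∘L (V : H →L[ℂ] H) = (V : H →L[ℂ] H) ∘L T →
      ∃ c : ℂ, T = c • (1 : H →L[ℂ] H) := by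
    intro T hTU hTV
    -- off-diagonal entries vanish
    have hoff : ∀ ℓ m : ℤ, m ≠ ℓ → ⟪e m, T (e ℓ)⟫_ℂ = 0 := by
      intro ℓ m hm
      set θ : ℝ := Real.pi / (m - ℓ) with hθ
      have hml : ((m : ℝ) - ℓ) ≠ 0 := by
        intro h
        apply hm
        exact_mod_cast sub_eq_zero.mp h
      have hc : T (U θ (e ℓ)) = U θ (T (e ℓ)) := by
        have := congrFun (congrArg (fun (f : H →L[ℂ] H) => (f : H → H)) (hTU θ)) (e ℓ)
        simpa using this
      rw [hU θ ℓ, map_smul] at hc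
      have hinner := congrArg (fun y => ⟪e m, y⟫_ℂ) hc
      simp only [inner_smul_right, hUcomp] at hinner
      -- exp relation
      have hexp : Complex.exp (Complex.I * m * θ) = - Complex.exp (Complex.I * ℓ * θ) := by
        have : Complex.I * m * θ = Complex.I * ℓ * θ + Complex.I * Real.pi := by
          have hmlC : ((m : ℂ) - ℓ) ≠ 0 := by
            intro h
            apply hml
            exact_mod_cast h
          have h1 : ((m : ℂ) - ℓ) * θ = (Real.pi : ℂ) := by
            rw [hθ]
            push_cast
            rw [mul_comm, div_mul_cancel₀ _ hmlC]
          linear_combination Complex.I * h1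
        rw [this, Complex.exp_add, mul_comm Complex.I ((Real.pi : ℝ) : ℂ),
          Complex.exp_pi_mul_I]
        ring
      rw [hexp] at hinner
      have hne : Complex.exp (Complex.I * ℓ * θ) ≠ 0 := Complex.exp_ne_zero _
      -- hinner : exp(iℓθ) * a = -exp(iℓθ) * a
      have : (2 : ℂ) * (Complex.exp (Complex.I * ℓ * θ) * ⟪e m, T (e ℓ)⟫_ℂ) = 0 := by
        linear_combination hinner
      simpa [hne] using this
    -- diagonal form
    set c : ℤ → ℂ := fun ℓ => (T (e ℓ) : ∀ _ : ℤ, ℂ) ℓ with hcdef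
    have hdiag : ∀ ℓ, T (e ℓ) = c ℓ • e ℓ := by
      intro ℓ
      apply lp.ext
      funext m
      by_cases hm : m = ℓ
      · subst hm
        simp only [lp.coeFn_smul, Pi.smul_apply, e, lp.single_apply_self, c, smul_eq_mul,
          mul_one]
      · have h0 := hoff ℓ m hm
        rw [inner_e_s2] at h0
        simp only [lp.coeFn_smul, Pi.smul_apply, e] at h0 ⊢
        rw [h0, lp.single_apply_ne _ _ _ hm, smul_zero]
    -- constancy along the shift
    have hstep : ∀ ℓ : ℤ, c (ℓ + 1) = c ℓ := by
      intro ℓ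
      have hc : T ((V : H →L[ℂ] H) (e ℓ)) = (V : H →L[ℂ] H) (T (e ℓ)) := by
        have := congrFun (congrArg (fun (f : H →L[ℂ] H) => (f : H → H)) hTV) (e ℓ)
        simpa using this
      rw [hV, hdiag, hdiag ℓ, map_smul, hV] at hc
      have hen : e (ℓ + 1) ≠ 0 := by
        intro h
        have := congrFun (congrArg (fun (x : H) => (x : ∀ _ : ℤ, ℂ)) h) (ℓ + 1)
        rw [e] at this
        dsimp only at this
        rw [lp.single_apply_self] at this
        simp at this
      have := sub_eq_zero.mpr hc
      rw [← sub_smul] at this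
      rcases smul_eq_zero.mp this with h | h
      · exact sub_eq_zero.mp h
      · exact absurd h hen
    have hconst : ∀ ℓ : ℤ, c ℓ = c 0 := by
      intro ℓ
      induction ℓ using Int.induction_on with
      | zero => rfl
      | succ n ih => rw [hstep n, ih]
      | pred n ih => rw [← ih, ← hstep (-n - 1)]; norm_num
    refine ⟨c 0, ?_⟩
    apply ext_basis
    intro ℓ
    rw [hdiag, hconst ℓ]
    simp
  refine ⟨key, ?_⟩
  ext T
  simp only [Set.mem_univ, iff_true]
  intro A hA
  obtain ⟨cA, rfl⟩ := key A
    (fun θ => by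
      have := hA (U θ) (Or.inl ⟨θ, rfl⟩)
      rw [ContinuousLinearMap.mul_def, ContinuousLinearMap.mul_def] at this
      exact this.symm)
    (by
      have := hA (V : H →L[ℂ] H) (Or.inr rfl)
      rw [ContinuousLinearMap.mul_def, ContinuousLinearMap.mul_def] at this
      exact this.symm)
  rw [smul_mul_assoc, mul_smul_comm, one_mul, mul_one]
end
end

section
/- Iterative construction of qubit subalgebras: for every natural number n, there exists a ℂ-star-algebra equivalence between B(H) and the star algebra Matrix (Fin (2^n)) (Fin (2^n)) (B(H)) of 2^n × 2^n matrices with entries in B(H) (with entrywise-adjoint conjugate-transpose star); i.e. B(H) ≅ M₂(ℂ)^{⊗ n} ⊗ B(H) as star algebras. -/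
open Complex

noncomputable section

namespace QubitAux

local notation "⟪" x ", " y "⟫" => inner (𝕜 := ℂ) x y

lemma inner_e_e (ℓ m : ℤ) : ⟪e ℓ, e m⟫ = if ℓ = m then 1 else 0 := by
  rw [e, e, lp.inner_single_left, lp.single_apply]
  simp [Pi.single_apply]

lemma orthonormal_e : Orthonormal ℂ e := by
  rw [orthonormal_iff_ite]
  intro i j
  exact inner_e_e i j

lemma inner_e_apply (m : ℤ) (x : H) : ⟪e m, x⟫ = x m := by
  rw [e, lp.inner_single_left]
  simp

lemma ext_inner_e {x y : H} (h : ∀ m, ⟪e m, x⟫ = ⟪e m, y⟫) : x = y := by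
  apply lp.ext
  funext m
  have := h m
  rwa [inner_e_apply, inner_e_apply] at this

lemma dense_span_e : Dense ((Submodule.span ℂ (Set.range e) : Submodule ℂ H) : Set H) := by
  intro f
  have hf : HasSum (fun i => lp.single 2 i (f i)) f := lp.hasSum_single (by norm_num) f
  refine mem_closure_of_tendsto hf (Filter.Eventually.of_forall fun s => ?_)
  refine Submodule.sum_mem _ fun i _ => ?_
  have h1 : lp.single 2 i (f i) = f i • e i := by
    rw [e, ← lp.single_smul, smul_eq_mul, mul_one]
  rw [h1]
  exact Submodule.smul_mem _ _ (Submodule.subset_span ⟨i, rfl⟩)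

lemma clm_ext_e {A B : H →L[ℂ] H} (h : ∀ ℓ, A (e ℓ) = B (e ℓ)) : A = B :=
  ContinuousLinearMap.ext_on dense_span_e (by rintro x ⟨ℓ, rfl⟩; exact h ℓ)

section Isometries

variable {ι : Type} [Fintype ι] [DecidableEq ι] (d : ι × ℤ ≃ ℤ)

/-- The family of shifted basis vectors. -/
def v (i : ι) (ℓ : ℤ) : H := e (d (i, ℓ))

lemma orthonormal_vp : Orthonormal ℂ (fun p : ι × ℤ => e (d p)) :=
  orthonormal_e.comp d d.injective

lemma orthonormal_v (i : ι) : Orthonormal ℂ (v d i) :=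
  (orthonormal_vp d).comp (fun ℓ => (i, ℓ)) (fun a b hab => (Prod.mk.injEq .. ▸ hab).2)

/-- The `i`-th isometry `S i : H →L[ℂ] H`, sending `e ℓ` to `e (d (i, ℓ))`. -/
def S (i : ι) : H →L[ℂ] H :=
  ((orthonormal_v d i).orthogonalFamily.linearIsometry).toContinuousLinearMap

lemma S_apply_e (i : ι) (ℓ : ℤ) : S d i (e ℓ) = v d i ℓ := by
  have := (orthonormal_v d i).orthogonalFamily.linearIsometry_apply_single (i := ℓ) (1 : ℂ)
  simpa [S, e, LinearIsometry.toSpanSingleton] using this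

lemma star_S_apply_e (i : ι) (m : ℤ) :
    (star (S d i) : H →L[ℂ] H) (e m) =
      if (d.symm m).1 = i then e ((d.symm m).2) else 0 := by
  apply ext_inner_e
  intro r
  rw [ContinuousLinearMap.star_eq_adjoint, ContinuousLinearMap.adjoint_inner_right,
    S_apply_e]
  have : ⟪v d i r, e m⟫ = if d (i, r) = m then 1 else 0 := inner_e_e _ _
  rw [this]
  by_cases h : (d.symm m).1 = i
  · simp only [h, if_true]
    rw [inner_e_e]
    have heq : d (i, r) = m ↔ r = (d.symm m).2 := by
      constructor
      · intro hc
        rw [← hc, d.symm_apply_apply]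
      · rintro rfl
        rw [← h]
        simp
    simp [heq]
  · simp only [h, if_false, inner_zero_right]
    have : d (i, r) ≠ m := by
      intro hc
      apply h
      rw [← hc, d.symm_apply_apply]
    simp [this]

lemma rel1 (i j : ι) :
    star (S d i) * S d j = if i = j then (1 : H →L[ℂ] H) else 0 := by
  apply clm_ext_e
  intro ℓ
  apply ext_inner_e
  intro m
  have lhs : (star (S d i) * S d j) (e ℓ) = star (S d i) (S d j (e ℓ)) := rfl
  rw [lhs, ContinuousLinearMap.star_eq_adjoint, ContinuousLinearMap.adjoint_inner_right,
    S_apply_e, S_apply_e]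
  have hv : ⟪v d i m, v d j ℓ⟫ = if (i, m) = (j, ℓ) then 1 else 0 := by
    rw [show ⟪v d i m, v d j ℓ⟫ = ⟪e (d (i, m)), e (d (j, ℓ))⟫ from rfl, inner_e_e]
    simp [d.apply_eq_iff_eq]
  rw [hv]
  by_cases h : i = j
  · subst h
    simp [Prod.ext_iff, inner_e_e, eq_comm]
  · have hne : (i, m) ≠ (j, ℓ) := by simp [Prod.ext_iff, h]
    simp [hne, h]

lemma rel2 : ∑ i : ι, S d i * star (S d i) = (1 : H →L[ℂ] H) := by
  apply clm_ext_e
  intro m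
  rw [ContinuousLinearMap.sum_apply]
  have hterm : ∀ i : ι, (S d i * star (S d i)) (e m) =
      if (d.symm m).1 = i then v d i ((d.symm m).2) else 0 := by
    intro i
    have : (S d i * star (S d i)) (e m) = S d i ((star (S d i)) (e m)) := rfl
    rw [this, star_S_apply_e]
    by_cases h : (d.symm m).1 = i
    · simp [h, S_apply_e]
    · simp [h]
  simp only [hterm]
  rw [Finset.sum_ite_eq (Finset.univ) ((d.symm m).1) (fun i => v d i ((d.symm m).2))]
  simp only [Finset.mem_univ, if_true]
  show v d (d.symm m).1 (d.symm m).2 = (e m)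
  rw [v]
  congr 1
  exact congrArg d (Prod.mk.eta) ▸ d.apply_symm_apply m

end Isometries

section MatrixEquiv

variable {ι : Type} [Fintype ι] [DecidableEq ι] (d : ι × ℤ ≃ ℤ)

/-- The `*`-isomorphism `B(H) ≃⋆ₐ[ℂ] Mₙ(B(H))` induced by the Cuntz-type family `S`. -/
def matrixEquiv : (H →L[ℂ] H) ≃⋆ₐ[ℂ] Matrix ι ι (H →L[ℂ] H) where
  toFun T := Matrix.of fun i j => star (S d i) * T * S d j
  invFun M := ∑ i : ι, ∑ j : ι, S d i * M i j * star (S d j)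
  left_inv T := by
    have hterm : ∀ i j : ι,
        S d i * (star (S d i) * T * S d j) * star (S d j)
          = (S d i * star (S d i)) * (T * (S d j * star (S d j))) := by
      intro i j; simp only [mul_assoc]
    simp only [Matrix.of_apply, hterm]
    rw [← Finset.sum_mul_sum, rel2, ← Finset.mul_sum, rel2]
    simp
  right_inv M := by
    ext i j
    simp only [Matrix.of_apply]
    simp only [Finset.mul_sum, Finset.sum_mul]
    have hterm : ∀ k l : ι, star (S d i) * (S d k * M k l * star (S d l)) * S d j
        = (star (S d i) * S d k) * M k l * (star (S d l) * S d j) := by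
      intro k l; simp only [mul_assoc]
    simp only [hterm, rel1]
    simp [ite_mul, mul_ite, Finset.sum_ite_eq, Finset.sum_ite_eq', eq_comm]
  map_mul' T U := by
    ext i j
    rw [Matrix.mul_apply]
    simp only [Matrix.of_apply]
    have hterm : ∀ k : ι,
        (star (S d i) * T * S d k) * (star (S d k) * U * S d j)
          = (star (S d i) * T) * (S d k * star (S d k)) * (U * S d j) := by
      intro k; simp only [mul_assoc]
    simp only [hterm]
    rw [← Finset.sum_mul, ← Finset.mul_sum, rel2]
    simp only [mul_one]
    simp [mul_assoc]
  map_add' T U := by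
    ext i j
    simp [Matrix.add_apply, mul_add, add_mul]
  map_smul' c T := by
    ext i j
    simp [Matrix.smul_apply, mul_smul_comm, smul_mul_assoc]
  map_star' T := by
    ext i j
    simp only [Matrix.of_apply, Matrix.star_apply, Matrix.conjTranspose_apply]
    simp [star_mul, mul_assoc]

end MatrixEquiv

end QubitAux

/-- **Iterative construction of qubit subalgebras:** for every `n : ℕ`, `B(H)` is
`*`-isomorphic (as a `ℂ`-star-algebra) to the `2^n × 2^n` matrix algebra over `B(H)`
(with conjugate-transpose star), i.e. `B(H) ≅ M₂(ℂ)^{⊗n} ⊗ B(H)`. -/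
theorem iterated_qubit_construction :
    ∀ n : ℕ, Nonempty
      ((H →L[ℂ] H) ≃⋆ₐ[ℂ] Matrix (Fin (2 ^ n)) (Fin (2 ^ n)) (H →L[ℂ] H)) := by
  intro n
  haveI : Nonempty (Fin (2 ^ n)) := ⟨⟨0, Nat.two_pow_pos n⟩⟩
  haveI : Infinite (Fin (2 ^ n) × ℤ) := Prod.infinite_of_right
  haveI : Denumerable (Fin (2 ^ n) × ℤ) := Denumerable.ofEncodableOfInfinite _
  exact ⟨QubitAux.matrixEquiv ((Denumerable.eqv (Fin (2 ^ n) × ℤ)).trans (Denumerable.eqv ℤ).symm)⟩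
end
end
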